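/- arXiv:1405.2042 — 3 statements merged into one kernel-verified Lean document; each statement's English description precedes it below -/
import Mathlib

section
/- Let R be a commutative Q-algebra. Then the map z_t : Λ(R) → Map(ℕ, R), defined by z_t(f)(n) = (-1)^n times the coefficient of t^n in -t·(d/dt)log(f), is a bijection; moreover it is a group isomorphism from (Λ(R), ·) to (Map(ℕ,R), +). -/
open PowerSeries

/-- Logarithmic derivative `f ↦ f' · f⁻¹` of a power series (with constant term `1`,
so that `invOfUnit f 1` is a genuine inverse). -/
noncomputable def logDeriv1 {R : Type*} [CommRing R] (f : R⟦X⟧) : R⟦X⟧ :=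
  d⁄dX R f * PowerSeries.invOfUnit f 1

/-- `z_n(f)` is `(-1)^n` times the `t^n`-coefficient of `-t·(d/dt) log f`. -/
noncomputable def zt {R : Type*} [CommRing R] (f : R⟦X⟧) (n : ℕ) : R :=
  (-1 : R)^n * coeff n (-(X * logDeriv1 f))

section Aux

variable {R : Type*} [CommRing R]

lemma mul_inv1 (f : R⟦X⟧) (hf : constantCoeff f = 1) : f * invOfUnit f 1 = 1 :=
  PowerSeries.mul_invOfUnit f 1 (by simpa using hf)

lemma invOfUnit_mul_eq (f g : R⟦X⟧) (hf : constantCoeff f = 1)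
    (hg : constantCoeff g = 1) :
    invOfUnit (f * g) 1 = invOfUnit f 1 * invOfUnit g 1 := by
  have hfg : constantCoeff (f * g) = 1 := by simp [map_mul, hf, hg]
  have h1 : (f * g) * invOfUnit (f * g) 1 = 1 := mul_inv1 _ hfg
  have h2 : (f * g) * (invOfUnit f 1 * invOfUnit g 1) = 1 := by
    have := mul_inv1 f hf
    have := mul_inv1 g hg
    calc (f * g) * (invOfUnit f 1 * invOfUnit g 1)
        = (f * invOfUnit f 1) * (g * invOfUnit g 1) := by ring
      _ = 1 := by rw [mul_inv1 f hf, mul_inv1 g hg, one_mul]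
  calc invOfUnit (f * g) 1
      = invOfUnit (f * g) 1 * ((f * g) * (invOfUnit f 1 * invOfUnit g 1)) := by rw [h2, mul_one]
    _ = ((f * g) * invOfUnit (f * g) 1) * (invOfUnit f 1 * invOfUnit g 1) := by ring
    _ = invOfUnit f 1 * invOfUnit g 1 := by rw [h1, one_mul]

lemma logDeriv1_mul (f g : R⟦X⟧) (hf : constantCoeff f = 1)
    (hg : constantCoeff g = 1) :
    logDeriv1 (f * g) = logDeriv1 f + logDeriv1 g := by
  unfold logDeriv1
  rw [invOfUnit_mul_eq f g hf hg, Derivation.leibniz, smul_eq_mul, smul_eq_mul]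
  have h1 : g * invOfUnit g 1 = 1 := mul_inv1 g hg
  have h2 : f * invOfUnit f 1 = 1 := mul_inv1 f hf
  calc (f * d⁄dX R g + g * d⁄dX R f) * (invOfUnit f 1 * invOfUnit g 1)
      = (d⁄dX R f * invOfUnit f 1) * (g * invOfUnit g 1)
        + (d⁄dX R g * invOfUnit g 1) * (f * invOfUnit f 1) := by ring
    _ = d⁄dX R f * invOfUnit f 1 + d⁄dX R g * invOfUnit g 1 := by
        rw [h1, h2, mul_one, mul_one]

variable [Algebra ℚ R]

noncomputable def invNat (n : ℕ) : R := algebraMap ℚ R (((n : ℚ) + 1)⁻¹)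

lemma natSucc_mul_invNat (n : ℕ) : ((n : R) + 1) * invNat n = 1 := by
  have hn : ((n : ℚ) + 1) ≠ 0 := by positivity
  have : ((n : R) + 1) = algebraMap ℚ R ((n : ℚ) + 1) := by
    simp [map_add, map_natCast]
  rw [this, invNat, ← map_mul, mul_inv_cancel₀ hn, map_one]

lemma succ_cancel {n : ℕ} {x y : R} (h : x * ((n : R) + 1) = y * ((n : R) + 1)) :
    x = y := by
  have := congrArg (· * invNat n) h
  simpa [mul_assoc, natSucc_mul_invNat n] using this

noncomputable def odeCoeff (h : R⟦X⟧) : ℕ → R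
  | 0 => 1
  | n + 1 => invNat n * ∑ k ∈ Finset.range (n + 1), coeff k h * odeCoeff h (n - k)
  decreasing_by exact Nat.lt_succ_of_le (Nat.sub_le n k)

lemma odeCoeff_spec (h : R⟦X⟧) (n : ℕ) :
    odeCoeff h (n + 1) * ((n : R) + 1) =
      ∑ k ∈ Finset.range (n + 1), coeff k h * odeCoeff h (n - k) := by
  rw [odeCoeff]
  calc invNat n * (∑ k ∈ Finset.range (n + 1), coeff k h * odeCoeff h (n - k)) * ((n : R) + 1)
      = ((n : R) + 1) * invNat n *
        (∑ k ∈ Finset.range (n + 1), coeff k h * odeCoeff h (n - k)) := by ring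
    _ = _ := by rw [natSucc_mul_invNat n, one_mul]

lemma ode_existsUnique (h : R⟦X⟧) :
    ∃! f : R⟦X⟧, constantCoeff f = 1 ∧ d⁄dX R f = h * f := by
  refine ⟨PowerSeries.mk (odeCoeff h), ⟨?_, ?_⟩, ?_⟩
  · simp [← coeff_zero_eq_constantCoeff_apply, odeCoeff]
  · ext n
    rw [coeff_derivative, coeff_mul, coeff_mk,
      Finset.Nat.sum_antidiagonal_eq_sum_range_succ_mk]
    simpa using odeCoeff_spec h n
  · rintro g ⟨hg0, hgD⟩
    ext n
    rw [coeff_mk]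
    induction n using Nat.strong_induction_on with
    | _ n ih =>
      match n with
      | 0 =>
        have h0 : odeCoeff h 0 = (1 : R) := by rw [odeCoeff]
        rw [h0, coeff_zero_eq_constantCoeff_apply]
        exact hg0
      | n + 1 =>
        apply succ_cancel (n := n)
        have h1 : coeff (n + 1) g * ((n : R) + 1) = coeff n (h * g) := by
          rw [← hgD, coeff_derivative]
        rw [h1, coeff_mul, Finset.Nat.sum_antidiagonal_eq_sum_range_succ_mk,
          odeCoeff_spec]
        refine Finset.sum_congr rfl fun k hk => ?_
        rw [ih (n - k) (Nat.lt_succ_of_le (Nat.sub_le n k))]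

lemma zt_iff (f : R⟦X⟧) (hf : constantCoeff f = 1) (α : ℕ → R) :
    (∀ n, 1 ≤ n → zt f n = α n) ↔
      d⁄dX R f = (PowerSeries.mk fun m => (-1 : R) ^ m * α (m + 1)) * f := by
  have hinv : invOfUnit f 1 * f = 1 := by
    rw [mul_comm]; exact mul_inv1 f hf
  constructor
  · intro hz
    have hL : logDeriv1 f = PowerSeries.mk fun m => (-1 : R) ^ m * α (m + 1) := by
      ext m
      have key := hz (m + 1) (Nat.le_add_left 1 m)
      rw [zt, map_neg, coeff_succ_X_mul] at key
      rw [coeff_mk]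
      have e : (-1 : R) ^ m * (-1 : R) ^ (m + 1) = -1 := by
        rw [← pow_add, show m + (m + 1) = 2 * m + 1 by ring, pow_succ, pow_mul]; norm_num
      linear_combination ((-1 : R) ^ m) * key + (coeff m (logDeriv1 f)) * e
    calc d⁄dX R f = d⁄dX R f * (invOfUnit f 1 * f) := by rw [hinv, mul_one]
      _ = logDeriv1 f * f := by rw [logDeriv1]; ring
      _ = _ := by rw [hL]
  · intro hD n hn
    obtain ⟨m, rfl⟩ := Nat.exists_eq_add_of_le hn
    have hL : logDeriv1 f = PowerSeries.mk fun m => (-1 : R) ^ m * α (m + 1) := by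
      rw [logDeriv1, hD]
      calc (PowerSeries.mk fun m => (-1 : R) ^ m * α (m + 1)) * f * invOfUnit f 1
          = (PowerSeries.mk fun m => (-1 : R) ^ m * α (m + 1)) * (f * invOfUnit f 1) := by ring
        _ = _ := by rw [mul_inv1 f hf, mul_one]
    rw [zt, map_neg, hL]
    have e1 : (1 + m : ℕ) = m + 1 := by omega
    simp only [e1]
    rw [coeff_succ_X_mul, coeff_mk]
    have e : (-1 : R) ^ m * (-1 : R) ^ (m + 1) = -1 := by
      rw [← pow_add, show m + (m + 1) = 2 * m + 1 by ring, pow_succ, pow_mul]; norm_num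
    linear_combination (-(α (m + 1))) * e

end Aux

/-- Over a ℚ-algebra, `z_t : Λ(R) → Map(ℕ, R)` is a group homomorphism from
(Λ(R), ·) to pointwise addition, and is bijective. -/
theorem stmt7 {R : Type*} [CommRing R] [Algebra ℚ R] :
    (∀ f g : R⟦X⟧, PowerSeries.constantCoeff f = 1 → PowerSeries.constantCoeff g = 1 →
      ∀ n, 1 ≤ n → zt (f * g) n = zt f n + zt g n) ∧
    (∀ α : ℕ → R, ∃! f : R⟦X⟧,
      PowerSeries.constantCoeff f = 1 ∧ ∀ n, 1 ≤ n → zt f n = α n) := by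
  constructor
  · intro f g hf hg n _
    unfold zt
    rw [logDeriv1_mul f g hf hg]
    rw [mul_add]
    simp only [map_neg, map_add]
    ring
  · intro α
    obtain ⟨f, ⟨hf0, hfD⟩, huniq⟩ :=
      ode_existsUnique (PowerSeries.mk fun m => (-1 : R) ^ m * α (m + 1))
    refine ⟨f, ⟨hf0, (zt_iff f hf0 α).mpr hfD⟩, ?_⟩
    rintro g ⟨hg0, hgz⟩
    exact huniq g ⟨hg0, (zt_iff g hg0 α).mp hgz⟩
end

section
/- Let S be a commutative ring that is a Q-algebra, equipped with additive maps ψ^n : S → S (n ≥ 1) with ψ^1 = id (a pre-ψ-ring structure). Then there exists a unique pre-λ-ring structure on S whose Adams operations are the given ψ^n. -/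
open PowerSeries

/-- A pre-λ-ring: a commutative ring `R` with operations `λ^n` satisfying
`λ^0(r) = 1`, `λ^1 = id` and `λ^n(r+s) = ∑_{i+j=n} λ^i(r) λ^j(s)`. -/
structure PreLambdaRing (R : Type*) [CommRing R] where
  lam : ℕ → R → R
  lam_zero : ∀ r, lam 0 r = 1
  lam_one : ∀ r, lam 1 r = r
  lam_add : ∀ n r s, lam n (r + s) = ∑ i ∈ Finset.range (n+1), lam i r * lam (n-i) s

/-- The series `λ_t(r) = ∑ λ^i(r) t^i`. -/
noncomputable def lambdaSeries {R : Type*} [CommRing R] (L : PreLambdaRing R) (r : R) : R⟦X⟧ :=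
  PowerSeries.mk fun i => L.lam i r

/-- The Adams operations, defined by `∑_{k≥1} ψ^k(r) (-t)^k = -t·(d/dt) log λ_t(r)`;
so `ψ^n(r)` is `(-1)^n` times the `t^n`-coefficient of `-t·(d/dt) log λ_t(r)`. -/
noncomputable def adams {R : Type*} [CommRing R] (L : PreLambdaRing R) (n : ℕ) (r : R) : R :=
  (-1 : R)^n * coeff (R := R) n (-(X * logDeriv1 (lambdaSeries L r)))

section aux

open Finset

set_option linter.unusedSectionVars false

variable {S : Type*} [CommRing S] [Algebra ℚ S]

theorem Stmt10Aux.nat_succ_unit (n : ℕ) : IsUnit ((n + 1 : ℕ) : S) := by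
  have h : ((n + 1 : ℕ) : ℚ) ≠ 0 := by positivity
  have := (isUnit_iff_ne_zero.mpr h).map (algebraMap ℚ S)
  simpa using this

/-- Uniqueness of solutions of the ODE `X·F' = F·h` with given constant coefficient. -/
theorem Stmt10Aux.ode_unique (F G h : S⟦X⟧) (h0 : constantCoeff (R := S) h = 0)
    (hFG : constantCoeff (R := S) F = constantCoeff (R := S) G)
    (hF : X * d⁄dX S F = F * h) (hG : X * d⁄dX S G = G * h) : F = G := by
  ext n
  induction n using Nat.strong_induction_on with
  | _ n ih =>
    match n with
    | 0 => simpa [coeff_zero_eq_constantCoeff] using hFG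
    | (n+1) =>
      have eF := congrArg (coeff (R := S) (n+1)) hF
      have eG := congrArg (coeff (R := S) (n+1)) hG
      rw [coeff_succ_X_mul, coeff_derivative, coeff_mul,
        Finset.Nat.sum_antidiagonal_eq_sum_range_succ_mk, Finset.sum_range_succ] at eF eG
      simp only [Nat.sub_self, coeff_zero_eq_constantCoeff, h0, mul_zero, add_zero] at eF eG
      have hsum : (∑ k ∈ range (n+1), coeff (R := S) k F * coeff (R := S) (n+1-k) h)
          = ∑ k ∈ range (n+1), coeff (R := S) k G * coeff (R := S) (n+1-k) h := by
        refine Finset.sum_congr rfl fun k hk => ?_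
        rw [ih k (by simpa using Nat.lt_succ_of_le (Nat.le_of_lt_succ (mem_range.mp hk)))]
      exact (Stmt10Aux.nat_succ_unit n).mul_right_cancel
        (by push_cast at eF eG ⊢; rw [eF, eG, hsum])

/-- The series `∑_{k≥1} (-1)^{k+1} ψ^k(r) t^k`. -/
noncomputable def psiSeries (ψ : ℕ → S → S) (r : S) : S⟦X⟧ :=
  PowerSeries.mk fun k => if k = 0 then 0 else (-1 : S)^(k+1) * ψ k r

@[simp] theorem constantCoeff_psiSeries (ψ : ℕ → S → S) (r : S) :
    constantCoeff (R := S) (psiSeries ψ r) = 0 := by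
  simpa [psiSeries] using rfl

theorem Stmt10Aux.sign_sq (n : ℕ) : ((-1:S)^n) * ((-1:S)^n) = 1 := by
  rw [← pow_add]; exact Even.neg_one_pow ⟨n, rfl⟩

theorem Stmt10Aux.logDeriv_eq_of_ode (F h : S⟦X⟧) (hc : constantCoeff (R := S) F = 1)
    (hode : X * d⁄dX S F = F * h) : X * logDeriv1 F = h := by
  have hinv : F * invOfUnit F 1 = 1 := mul_invOfUnit F 1 (by simpa using hc)
  unfold logDeriv1
  calc X * (d⁄dX S F * invOfUnit F 1) = (X * d⁄dX S F) * invOfUnit F 1 := by ring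
  _ = F * h * invOfUnit F 1 := by rw [hode]
  _ = h * (F * invOfUnit F 1) := by ring
  _ = h := by rw [hinv, mul_one]

theorem Stmt10Aux.ode_of_logDeriv (F h : S⟦X⟧) (hc : constantCoeff (R := S) F = 1)
    (hlog : X * logDeriv1 F = h) : X * d⁄dX S F = F * h := by
  have hinv : F * invOfUnit F 1 = 1 := mul_invOfUnit F 1 (by simpa using hc)
  calc X * d⁄dX S F = (X * d⁄dX S F) * (F * invOfUnit F 1) := by rw [hinv, mul_one]
  _ = (X * (d⁄dX S F * invOfUnit F 1)) * F := by ring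
  _ = h * F := by rw [show X * (d⁄dX S F * invOfUnit F 1) = h from hlog]
  _ = F * h := mul_comm _ _

theorem Stmt10Aux.adams_eq {L : PreLambdaRing S} {ψ : ℕ → S → S} {r : S}
    (hlog : X * logDeriv1 (lambdaSeries L r) = psiSeries ψ r) :
    ∀ n, 1 ≤ n → adams L n r = ψ n r := by
  intro n hn
  unfold adams
  rw [map_neg, hlog]
  have : coeff (R := S) n (psiSeries ψ r) = (-1:S)^(n+1) * ψ n r := by
    simp only [psiSeries, coeff_mk, if_neg (by omega : ¬ n = 0)]
  rw [this]
  calc (-1:S)^n * -((-1:S)^(n+1) * ψ n r) = ((-1:S)^n * (-1:S)^n) * ψ n r := by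
        rw [pow_succ]; ring
  _ = ψ n r := by rw [Stmt10Aux.sign_sq, one_mul]

theorem Stmt10Aux.logDeriv_of_adams {L : PreLambdaRing S} {ψ : ℕ → S → S} {r : S}
    (h : ∀ n, 1 ≤ n → adams L n r = ψ n r) :
    X * logDeriv1 (lambdaSeries L r) = psiSeries ψ r := by
  ext n
  match n with
  | 0 => simp [psiSeries]
  | (n+1) =>
    have h' := h (n+1) (by omega)
    unfold adams at h'
    rw [map_neg] at h'
    set c := coeff (R := S) (n+1) (X * logDeriv1 (lambdaSeries L r)) with hc
    have key : (-1:S)^(n+1+1) * (-1:S)^(n+1) = -1 := by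
      rw [← pow_add]; exact Odd.neg_one_pow ⟨n+1, by ring⟩
    have : c = (-1:S)^(n+1+1) * ψ (n+1) r := by
      calc c = (-1:S)^(n+1+1) * ((-1:S)^(n+1) * -c) := by
            rw [show (-1:S)^(n+1+1) * ((-1:S)^(n+1) * -c)
              = ((-1:S)^(n+1+1) * (-1:S)^(n+1)) * -c from by ring, key]; ring
      _ = (-1:S)^(n+1+1) * ψ (n+1) r := by rw [h']
    rw [this]
    simp only [psiSeries, coeff_mk, if_neg (by omega : ¬ n+1 = 0)]

/-- The λ-operations defined by Newton's recursion from the Adams operations. -/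
noncomputable def lamAux (ψ : ℕ → S → S) (r : S) : ℕ → S
  | 0 => 1
  | (n+1) => (algebraMap ℚ S (1/(n+1))) *
      ∑ j ∈ Finset.range (n+1), (-1 : S)^j * ψ (j+1) r * lamAux ψ r (n - j)
  decreasing_by exact Nat.lt_succ_of_le (Nat.sub_le n j)

theorem Stmt10Aux.lamAux_ode (ψ : ℕ → S → S) (r : S) :
    X * d⁄dX S (PowerSeries.mk (lamAux ψ r)) =
      (PowerSeries.mk (lamAux ψ r)) * psiSeries ψ r := by
  ext n
  match n with
  | 0 =>
    simp [coeff_mul, psiSeries]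
  | (n+1) =>
    rw [coeff_succ_X_mul, coeff_derivative, coeff_mul,
      Finset.Nat.sum_antidiagonal_eq_sum_range_succ_mk, Finset.sum_range_succ]
    simp only [coeff_mk, psiSeries, Nat.sub_self, if_pos rfl, if_true, mul_zero, add_zero]
    have h2 : ∀ j ∈ Finset.range (n+1),
        (lamAux ψ r j *
          if n+1-j = 0 then 0 else (-1:S)^(n+1-j+1) * ψ (n+1-j) r)
        = (-1:S)^(n-j) * ψ (n+1-j) r * lamAux ψ r j := by
      intro j hj
      have hj' : j ≤ n := Nat.le_of_lt_succ (mem_range.mp hj)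
      rw [if_neg (by omega)]
      have : (-1:S)^(n+1-j+1) = (-1:S)^(n-j) := by
        have : n+1-j+1 = (n-j) + 2 := by omega
        rw [this, pow_add]; ring
      rw [this]; ring
    rw [Finset.sum_congr rfl h2]
    show lamAux ψ r (n+1) * ((n:S)+1) = _
    rw [lamAux]
    have hcancel : (algebraMap ℚ S (1/(n+1))) * ((n:S)+1) = 1 := by
      have : ((n:S)+1) = algebraMap ℚ S ((n:ℚ)+1) := by push_cast; simp
      rw [this, ← map_mul]
      rw [one_div, inv_mul_cancel₀ (by positivity : ((n:ℚ)+1) ≠ 0)]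
      simp
    rw [mul_comm (algebraMap ℚ S (1/(n+1))) _, mul_assoc]
    push_cast at hcancel ⊢
    rw [hcancel, mul_one]
    rw [← Finset.sum_range_reflect]
    refine Finset.sum_congr rfl fun j hj => ?_
    have hj' : j ≤ n := Nat.le_of_lt_succ (mem_range.mp hj)
    have e1 : n + 1 - 1 - j = n - j := by omega
    have e2 : n - (n - j) = j := by omega
    have e3 : n - j + 1 = n + 1 - j := by omega
    rw [e1, e2, e3]

theorem Stmt10Aux.lamAux_zero (ψ : ℕ → S → S) (r : S) : lamAux ψ r 0 = 1 := by
  rw [lamAux]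

theorem Stmt10Aux.lamAux_one (ψ : ℕ → S → S) (h1 : ∀ r, ψ 1 r = r) (r : S) :
    lamAux ψ r 1 = r := by
  rw [show (1:ℕ) = 0 + 1 from rfl, lamAux]
  simp [Stmt10Aux.lamAux_zero, h1]

theorem Stmt10Aux.constantCoeff_mk_lamAux (ψ : ℕ → S → S) (r : S) :
    constantCoeff (R := S) (PowerSeries.mk (lamAux ψ r)) = 1 := by
  rw [← coeff_zero_eq_constantCoeff, coeff_mk, Stmt10Aux.lamAux_zero]

end aux

/-- A pre-ψ-ring structure on a ℚ-algebra lifts to a unique pre-λ-ring structure whose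
Adams operations are the given `ψ^n`. -/
theorem stmt10 {S : Type*} [CommRing S] [Algebra ℚ S] (ψ : ℕ → S → S)
    (h1 : ∀ r, ψ 1 r = r)
    (hadd : ∀ n, 1 ≤ n → ∀ r s : S, ψ n (r + s) = ψ n r + ψ n s) :
    ∃! L : PreLambdaRing S, ∀ n, 1 ≤ n → ∀ r : S, adams L n r = ψ n r := by
  classical
  -- split the psi-series over a sum
  have hsplit : ∀ r s : S, psiSeries ψ (r + s) = psiSeries ψ r + psiSeries ψ s := by
    intro r s
    ext k
    simp only [psiSeries, coeff_mk, map_add]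
    by_cases hk : k = 0
    · simp [hk]
    · rw [if_neg hk, if_neg hk, if_neg hk, hadd k (by omega), mul_add]
  -- the constructed pre-λ-ring
  refine ⟨{ lam := fun n r => lamAux ψ r n
            lam_zero := fun r => Stmt10Aux.lamAux_zero ψ r
            lam_one := fun r => Stmt10Aux.lamAux_one ψ h1 r
            lam_add := ?_ }, ?_, ?_⟩
  · -- lam_add
    intro n r s
    have key : PowerSeries.mk (lamAux ψ (r + s)) =
        PowerSeries.mk (lamAux ψ r) * PowerSeries.mk (lamAux ψ s) := by
      apply Stmt10Aux.ode_unique _ _ (psiSeries ψ (r + s))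
        (constantCoeff_psiSeries ψ (r + s))
      · rw [Stmt10Aux.constantCoeff_mk_lamAux, map_mul,
          Stmt10Aux.constantCoeff_mk_lamAux, Stmt10Aux.constantCoeff_mk_lamAux, mul_one]
      · exact Stmt10Aux.lamAux_ode ψ (r + s)
      · rw [hsplit]
        have hdm : d⁄dX S (PowerSeries.mk (lamAux ψ r) * PowerSeries.mk (lamAux ψ s))
            = PowerSeries.mk (lamAux ψ r) * d⁄dX S (PowerSeries.mk (lamAux ψ s))
              + PowerSeries.mk (lamAux ψ s) * d⁄dX S (PowerSeries.mk (lamAux ψ r)) := by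
          simpa [smul_eq_mul] using Derivation.leibniz (d⁄dX S)
            (PowerSeries.mk (lamAux ψ r)) (PowerSeries.mk (lamAux ψ s))
        rw [hdm, mul_add, mul_add]
        have hr := Stmt10Aux.lamAux_ode ψ r
        have hs := Stmt10Aux.lamAux_ode ψ s
        calc X * (PowerSeries.mk (lamAux ψ r) * d⁄dX S (PowerSeries.mk (lamAux ψ s)))
              + X * (PowerSeries.mk (lamAux ψ s) * d⁄dX S (PowerSeries.mk (lamAux ψ r)))
            = PowerSeries.mk (lamAux ψ r) * (X * d⁄dX S (PowerSeries.mk (lamAux ψ s)))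
              + PowerSeries.mk (lamAux ψ s) * (X * d⁄dX S (PowerSeries.mk (lamAux ψ r))) := by
              ring
        _ = _ := by rw [hr, hs]; ring
    have := congrArg (PowerSeries.coeff (R := S) n) key
    rw [coeff_mk, PowerSeries.coeff_mul,
      Finset.Nat.sum_antidiagonal_eq_sum_range_succ_mk] at this
    simpa using this
  · -- adams of the constructed L = ψ
    intro n hn r
    refine Stmt10Aux.adams_eq ?_ n hn
    refine Stmt10Aux.logDeriv_eq_of_ode _ _ ?_ ?_
    · exact Stmt10Aux.constantCoeff_mk_lamAux ψ r
    · exact Stmt10Aux.lamAux_ode ψ r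
  · -- uniqueness
    intro L' hL'
    have hser : ∀ r : S, lambdaSeries L' r = PowerSeries.mk (lamAux ψ r) := by
      intro r
      have hc' : constantCoeff (R := S) (lambdaSeries L' r) = 1 := by
        rw [← coeff_zero_eq_constantCoeff]
        simpa [lambdaSeries] using L'.lam_zero r
      apply Stmt10Aux.ode_unique _ _ (psiSeries ψ r) (constantCoeff_psiSeries ψ r)
      · rw [hc', Stmt10Aux.constantCoeff_mk_lamAux]
      · exact Stmt10Aux.ode_of_logDeriv _ _ hc'
          (Stmt10Aux.logDeriv_of_adams (fun n hn => hL' n hn r))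
      · exact Stmt10Aux.lamAux_ode ψ r
    have hlam : L'.lam = fun n r => lamAux ψ r n := by
      funext n r
      have := congrArg (PowerSeries.coeff (R := S) n) (hser r)
      simpa [lambdaSeries] using this
    cases L'
    simp only at hlam
    simp [hlam]
end

section
/- Let G be a finite group acting on a finite set X, and let χ ∈ Map(G, ℂ) be the permutation character χ(g) = |{x ∈ X : gx = x}|. Then for every g ∈ G and every n ≥ 1, χ(g^n) = χ(g^{gcd(n, |G|)}). -/
private lemma fix_zpow {G X : Type*} [Group G] [MulAction G X] {a : G} {x : X}
    (h : a • x = x) (m : ℤ) : a ^ m • x = x := by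
  induction m using Int.induction_on with
  | zero => simp
  | succ k ih => rw [zpow_add, zpow_one, mul_smul, h, ih]
  | pred k ih =>
      have h' : a⁻¹ • x = x := by rw [inv_smul_eq_iff, h]
      rw [sub_eq_add_neg, zpow_add, mul_smul, zpow_neg_one, h', ih]

/-- For the permutation character `χ(g) = #{x : g • x = x}` of a finite group acting on a
finite set, `χ(g^n) = χ(g^gcd(n,|G|))` for every `n ≥ 1`. -/
theorem stmt18 {G X : Type*} [Group G] [Fintype G] [Fintype X] [DecidableEq X]
    [MulAction G X] (g : G) (n : ℕ) (hn : 1 ≤ n) :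
    (Fintype.card {x : X // g ^ n • x = x} : ℂ) =
      (Fintype.card {x : X // g ^ (Nat.gcd n (Fintype.card G)) • x = x} : ℂ) := by
  set d := Nat.gcd n (Fintype.card G) with hd
  have key : ∀ x : X, g ^ n • x = x ↔ g ^ d • x = x := by
    intro x
    constructor
    · intro h
      have h1 : g ^ (d : ℤ) = (g ^ n) ^ (Nat.gcdA n (Fintype.card G)) := by
        rw [hd, Nat.gcd_eq_gcd_ab n (Fintype.card G), zpow_add, zpow_mul, zpow_mul]
        simp [pow_card_eq_one]
      have h2 : g ^ d = (g ^ n) ^ (Nat.gcdA n (Fintype.card G)) := by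
        rw [← zpow_natCast, h1]
      rw [h2]
      exact fix_zpow h _
    · intro h
      have hdn : d ∣ n := Nat.gcd_dvd_left _ _
      have : g ^ n = (g ^ d) ^ (n / d) := by
        rw [← pow_mul, Nat.mul_div_cancel' hdn]
      rw [this, ← zpow_natCast]
      exact fix_zpow h _
  exact_mod_cast congrArg (Nat.cast (R := ℂ))
    (Fintype.card_congr (Equiv.subtypeEquivRight key))
end
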